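/- Deterministic sufficient maximum principle: under the setup of the previous statement, suppose additionally that (i) h : ℝ^N → ℝ is concave and C¹ with p̂(T) = ∇h(X̂(T)); (ii) for a.e. t, H(t, X̂(t), û(t), p̂(t)) = sup_{v ∈ U} H(t, X̂(t), v, p̂(t)); (iii) for each t, x ↦ sup_{v ∈ U} H(t, x, v, p̂(t)) is concave and the sup exists. Then for every admissible control u with X(0) = X̂(0), ∫₀ᵀ f(t, X̂(t), û(t)) dt + h(X̂(T)) ≥ ∫₀ᵀ f(t, X(t), u(t)) dt + h(X(T)). -/

import Mathlib

open MeasureTheory intervalIntegral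
open scoped RealInnerProductSpace

lemma supergrad_fderiv {E : Type*} [NormedAddCommGroup E] [NormedSpace ℝ E]
    (κ g : E → ℝ) (hκ : ConcaveOn ℝ Set.univ κ) (hle : ∀ x, g x ≤ κ x)
    {x₀ : E} (heq : g x₀ = κ x₀) {g' : E →L[ℝ] ℝ} (hg : HasFDerivAt g g' x₀)
    (y : E) : κ y - κ x₀ ≤ g' (y - x₀) := by
  set d := y - x₀ with hd
  have key : ∀ s : ℝ, 0 < s → κ y - κ x₀ ≤ (g x₀ - g (x₀ - s • d)) / s := by
    intro s hs
    have h1s : (0:ℝ) < 1 + s := by linarith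
    have ha : (0:ℝ) ≤ 1 / (1 + s) := by positivity
    have hb : (0:ℝ) ≤ s / (1 + s) := by positivity
    have hab : 1 / (1 + s) + s / (1 + s) = 1 := by field_simp
    have hcomb : (1 / (1+s)) • (x₀ - s • d) + (s / (1+s)) • y = x₀ := by
      rw [hd]; match_scalars <;> field_simp <;> ring
    have hcc := hκ.2 (Set.mem_univ (x₀ - s • d)) (Set.mem_univ y) ha hb hab
    rw [hcomb] at hcc
    have h2 : g (x₀ - s • d) ≤ κ (x₀ - s • d) := hle _
    rw [le_div_iff₀ hs]
    have hgk : (1 / (1+s)) * κ (x₀ - s • d) + (s / (1+s)) * κ y ≤ κ x₀ := by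
      simpa using hcc
    have h6 : κ (x₀ - s • d) + s * κ y ≤ (1 + s) * κ x₀ := by
      have h7 := mul_le_mul_of_nonneg_left hgk h1s.le
      have h8 : (1 + s) * (1 / (1 + s) * κ (x₀ - s • d) + s / (1 + s) * κ y)
          = κ (x₀ - s • d) + s * κ y := by field_simp
      linarith [h8.le, h8.ge]
    nlinarith
  have hψ : HasDerivAt (fun s : ℝ => g (x₀ - s • d)) (-(g' d)) 0 := by
    have h1 : HasDerivAt (fun s : ℝ => x₀ - s • d) (-((1:ℝ) • d)) 0 :=
      ((hasDerivAt_id (0:ℝ)).smul_const d).const_sub x₀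
    have h2 : HasFDerivAt g g' ((fun s : ℝ => x₀ - s • d) 0) := by simpa using hg
    have h3 := h2.comp_hasDerivAt 0 h1
    simp at h3
    exact h3
  have hs0 : (fun s : ℝ => g (x₀ - (0:ℝ) • d)) = fun _ => g x₀ := by simp
  have htend : Filter.Tendsto (fun s : ℝ => (g x₀ - g (x₀ - s • d)) / s)
      (nhdsWithin 0 (Set.Ioi 0)) (nhds (g' d)) := by
    have h3 := hasDerivAt_iff_tendsto_slope.mp hψ
    have h4 : Filter.Tendsto (slope (fun s : ℝ => g (x₀ - s • d)) 0)
        (nhdsWithin 0 (Set.Ioi 0)) (nhds (-(g' d))) :=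
      h3.mono_left (nhdsWithin_mono 0 (fun x hx => ne_of_gt hx))
    have h5 : ∀ s ∈ Set.Ioi (0:ℝ),
        -(slope (fun s : ℝ => g (x₀ - s • d)) 0 s) = (g x₀ - g (x₀ - s • d)) / s := by
      intro s hs
      simp [slope_def_field, div_eq_iff (ne_of_gt (Set.mem_Ioi.mp hs))]
      ring
    have := (h4.neg).congr' (Filter.eventuallyEq_of_mem self_mem_nhdsWithin h5)
    simpa using this
  exact ge_of_tendsto htend (Filter.eventually_of_mem self_mem_nhdsWithin
    (fun s hs => key s (Set.mem_Ioi.mp hs)))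

lemma supergrad_gradient {F : Type*} [NormedAddCommGroup F] [InnerProductSpace ℝ F]
    [CompleteSpace F]
    (κ g : F → ℝ) (hκ : ConcaveOn ℝ Set.univ κ) (hle : ∀ x, g x ≤ κ x)
    {x₀ : F} (heq : g x₀ = κ x₀) (hg : DifferentiableAt ℝ g x₀) (y : F) :
    κ y - κ x₀ ≤ ⟪gradient g x₀, y - x₀⟫ := by
  have h1 := supergrad_fderiv κ g hκ hle heq hg.hasFDerivAt y
  have h2 : ⟪gradient g x₀, y - x₀⟫ = (fderiv ℝ g x₀) (y - x₀) := by
    rw [gradient, InnerProductSpace.toDual_symm_apply]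
  linarith [h2.le, h2.ge]

/-- Deterministic sufficient maximum principle (σ ≡ 0, no Markov chain specialization
of Theorem 4.1): with `H(t,x,v,p) = f(t,x,v) + ⟪b(t,x,v), p⟫`, if `h` is concave and
`C¹`, `p̂` solves the adjoint equation with `p̂(T) = ∇h(X̂(T))`, `û` maximizes the
Hamiltonian along `X̂`, and `x ↦ max_v H(t,x,v,p̂(t))` is concave (with the max
attained), then `û` is optimal: for every admissible control `u` with `X(0) = X̂(0)`,
`∫₀ᵀ f(t,X̂,û) dt + h(X̂(T)) ≥ ∫₀ᵀ f(t,X,u) dt + h(X(T))`. -/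
theorem deterministic_sufficient_maximum_principle (N P : ℕ) (T : ℝ) (hT : 0 < T)
    (U : Set (EuclideanSpace ℝ (Fin P)))
    (b : ℝ → EuclideanSpace ℝ (Fin N) → EuclideanSpace ℝ (Fin P) → EuclideanSpace ℝ (Fin N))
    (f : ℝ → EuclideanSpace ℝ (Fin N) → EuclideanSpace ℝ (Fin P) → ℝ)
    (h : EuclideanSpace ℝ (Fin N) → ℝ)
    (H : ℝ → EuclideanSpace ℝ (Fin N) → EuclideanSpace ℝ (Fin P) →
      EuclideanSpace ℝ (Fin N) → ℝ)
    (hH : ∀ t x v p, H t x v p = f t x v + ⟪b t x v, p⟫)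
    (u uhat : ℝ → EuclideanSpace ℝ (Fin P))
    (hu : ∀ t, u t ∈ U) (huhat : ∀ t, uhat t ∈ U)
    (X Xhat phat : ℝ → EuclideanSpace ℝ (Fin N))
    (hX : ∀ t ∈ Set.Icc (0:ℝ) T, HasDerivAt X (b t (X t) (u t)) t)
    (hXhat : ∀ t ∈ Set.Icc (0:ℝ) T, HasDerivAt Xhat (b t (Xhat t) (uhat t)) t)
    (hX0 : X 0 = Xhat 0)
    -- (i) h concave and C¹, with terminal condition for the adjoint
    (hconc : ConcaveOn ℝ Set.univ h) (hhC1 : ContDiff ℝ 1 h)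
    (hHdiff : ∀ t v, Differentiable ℝ (fun x => H t x v (phat t)))
    (hphat : ∀ t ∈ Set.Icc (0:ℝ) T,
      HasDerivAt phat (-(gradient (fun x => H t x (uhat t) (phat t)) (Xhat t))) t)
    (hterm : phat T = gradient h (Xhat T))
    -- (ii) the maximum condition
    (hmax : ∀ t ∈ Set.Icc (0:ℝ) T, ∀ v ∈ U,
      H t (Xhat t) v (phat t) ≤ H t (Xhat t) (uhat t) (phat t))
    -- (iii) x ↦ max_v H(t,x,v,p̂(t)) exists and is concave
    (hconcH : ∀ t ∈ Set.Icc (0:ℝ) T, ∃ Hmax : EuclideanSpace ℝ (Fin N) → ℝ,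
      ConcaveOn ℝ Set.univ Hmax ∧
      ∀ x, IsGreatest {y : ℝ | ∃ v ∈ U, y = H t x v (phat t)} (Hmax x))
    -- admissibility: the running costs are integrable
    (hfint : IntervalIntegrable (fun t => f t (X t) (u t)) volume 0 T)
    (hfinthat : IntervalIntegrable (fun t => f t (Xhat t) (uhat t)) volume 0 T) :
    (∫ t in (0:ℝ)..T, f t (Xhat t) (uhat t)) + h (Xhat T)
      ≥ (∫ t in (0:ℝ)..T, f t (X t) (u t)) + h (X T) := by
  
  set φ : ℝ → ℝ := fun t => ⟪phat t, X t - Xhat t⟫ with hφdef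
  set D : ℝ → ℝ := fun t =>
    ⟪phat t, b t (X t) (u t) - b t (Xhat t) (uhat t)⟫ +
      ⟪-(gradient (fun x => H t x (uhat t) (phat t)) (Xhat t)), X t - Xhat t⟫ with hDdef
  -- derivative of φ
  have hφderiv : ∀ t ∈ Set.Icc (0:ℝ) T, HasDerivAt φ (D t) t := by
    intro t ht
    exact HasDerivAt.inner ℝ (hphat t ht) ((hX t ht).sub (hXhat t ht))
  -- pointwise bound on the derivative of φ
  have hbound : ∀ t ∈ Set.Icc (0:ℝ) T, D t ≤ f t (Xhat t) (uhat t) - f t (X t) (u t) := by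
    intro t ht
    obtain ⟨Hm, hHmconc, hHmgr⟩ := hconcH t ht
    have h1 : ∀ x, H t x (uhat t) (phat t) ≤ Hm x :=
      fun x => (hHmgr x).2 ⟨uhat t, huhat t, rfl⟩
    have h2 : H t (Xhat t) (uhat t) (phat t) = Hm (Xhat t) := by
      refine le_antisymm (h1 _) ?_
      obtain ⟨v, hv, hveq⟩ := (hHmgr (Xhat t)).1
      rw [hveq]; exact hmax t ht v hv
    have h3 := supergrad_gradient Hm (fun x => H t x (uhat t) (phat t)) hHmconc h1 h2
      ((hHdiff t (uhat t)) (Xhat t)) (X t)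
    have h4 : H t (X t) (u t) (phat t) ≤ Hm (X t) := (hHmgr (X t)).2 ⟨u t, hu t, rfl⟩
    have h5 : ⟪phat t, b t (X t) (u t) - b t (Xhat t) (uhat t)⟫ =
        ⟪b t (X t) (u t), phat t⟫ - ⟪b t (Xhat t) (uhat t), phat t⟫ := by
      rw [inner_sub_right, real_inner_comm (phat t) (b t (X t) (u t)),
        real_inner_comm (phat t) (b t (Xhat t) (uhat t))]
    have h6 : ⟪-(gradient (fun x => H t x (uhat t) (phat t)) (Xhat t)), X t - Xhat t⟫ =
        -⟪gradient (fun x => H t x (uhat t) (phat t)) (Xhat t), X t - Xhat t⟫ :=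
      inner_neg_left _ _
    have hHX := hH t (X t) (u t) (phat t)
    have hHXhat := hH t (Xhat t) (uhat t) (phat t)
    rw [hDdef]
    dsimp only
    rw [h5, h6]
    linarith
  -- FTC inequality
  have hφcont : ContinuousOn φ (Set.Icc 0 T) :=
    fun t ht => ((hφderiv t ht).continuousAt).continuousWithinAt
  have hint : IntervalIntegrable (fun t => f t (Xhat t) (uhat t) - f t (X t) (u t))
      volume 0 T := hfinthat.sub hfint
  have hIntOn : MeasureTheory.IntegrableOn
      (fun t => f t (Xhat t) (uhat t) - f t (X t) (u t)) (Set.Icc 0 T) volume :=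
    (intervalIntegrable_iff_integrableOn_Icc_of_le hT.le).mp hint
  have hFTC : φ T - φ 0 ≤ ∫ t in (0:ℝ)..T, (f t (Xhat t) (uhat t) - f t (X t) (u t)) :=
    sub_le_integral_of_hasDeriv_right_of_le hT.le hφcont
      (fun x hx => ((hφderiv x ⟨hx.1.le, hx.2.le⟩).hasDerivWithinAt))
      hIntOn (fun x hx => hbound x ⟨hx.1.le, hx.2.le⟩)
  have hφ0 : φ 0 = 0 := by rw [hφdef]; simp [hX0]
  -- terminal concavity estimate
  have hterm2 : h (X T) - h (Xhat T) ≤ φ T := by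
    have := supergrad_gradient h h hconc (fun x => le_rfl) rfl
      ((hhC1.differentiable one_ne_zero) (Xhat T)) (X T)
    rw [hφdef]; dsimp only; rw [hterm]
    exact this
  have hsplit : (∫ t in (0:ℝ)..T, (f t (Xhat t) (uhat t) - f t (X t) (u t)))
      = (∫ t in (0:ℝ)..T, f t (Xhat t) (uhat t)) - ∫ t in (0:ℝ)..T, f t (X t) (u t) :=
    intervalIntegral.integral_sub hfinthat hfint
  rw [hsplit] at hFTC
  linarith
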